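/- Generalized MacWilliams identity for split weight enumerators: with B_{l,r} the split weight enumerator of C_DS and B^⊥_{i,j} that of C_DS^⊥, one has B_{l,r} = (1/4^n) Σ_{i=0}^{n} Σ_{j=0}^{m} B^⊥_{i,j} K_l(i; n, 4) K_r(j; m, 2), where K_t(x; N, q) = Σ_{s=0}^{t} (-1)^s (q-1)^{t-s} C(x,s) C(N-x, t-s) is the q-ary Krawtchouk polynomial. -/

import Mathlib

open Finset

noncomputable section

abbrev F2 := ZMod 2
abbrev F4 := GaloisField 2 2

/-- Trace from `F4` to `F2`. -/
def trF : F4 →ₗ[F2] F2 := Algebra.trace F2 F4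

/-- Hamming weight of a vector. -/
def wt {α : Type*} [Zero α] {N : ℕ} (x : Fin N → α) : ℕ := Nat.card {i // x i ≠ 0}

/-- Hermitian trace inner product on `F4^n`. -/
def ipD {n : ℕ} (x y : Fin n → F4) : F2 := trF (∑ i, x i * (y i) ^ 2)

/-- Mixed inner product on `F4^n × F2^m`. -/
def ipDS {n m : ℕ} (x y : (Fin n → F4) × (Fin m → F2)) : F2 :=
  ipD x.1 y.1 + ∑ j, x.2 j * y.2 j

/-- The F2-row space of `H` inside `F4^n`. -/
def rowSpanF2 {n m : ℕ} (H : Fin m → Fin n → F4) : Set (Fin n → F4) :=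
  {v | ∃ u : Fin m → F2, v = fun i => ∑ r, algebraMap F2 F4 (u r) * H r i}

/-- The data-syndrome code generated by the rows of `[H | I_m]`. -/
def CDS {n m : ℕ} (H : Fin m → Fin n → F4) : Set ((Fin n → F4) × (Fin m → F2)) :=
  {w | ∃ u : Fin m → F2, w = (fun i => ∑ r, algebraMap F2 F4 (u r) * H r i, u)}

/-- Dual with respect to the mixed inner product. -/
def dualDS {n m : ℕ} (D : Set ((Fin n → F4) × (Fin m → F2))) :
    Set ((Fin n → F4) × (Fin m → F2)) :=
  {v | ∀ w ∈ D, ipDS w v = 0}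

/-- Split weight enumerator. -/
def Bwt {n m : ℕ} (D : Set ((Fin n → F4) × (Fin m → F2))) (i j : ℕ) : ℕ :=
  Nat.card {w : (Fin n → F4) × (Fin m → F2) // w ∈ D ∧ wt w.1 = i ∧ wt w.2 = j}

/-- q-ary Krawtchouk polynomial `K_t(x; N, q)` evaluated at integer `x`. -/
def kraw (t x N q : ℕ) : ℚ :=
  ∑ s ∈ Finset.range (t + 1),
    (-1 : ℚ) ^ s * ((q : ℚ) - 1) ^ (t - s) * (x.choose s) * ((N - x).choose (t - s))

noncomputable instance : Fintype F4 := Fintype.ofFinite _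
section Aux
open scoped Classical

noncomputable instance : Fintype F4 := Fintype.ofFinite _

def chi (x : F2) : ℚ := if x = 0 then 1 else -1

lemma chi_zero : chi 0 = 1 := if_pos rfl

lemma chi_one : chi 1 = -1 := by norm_num [chi]

lemma F2_cases : ∀ x : F2, x = 0 ∨ x = 1 := by decide

lemma chi_add (a b : F2) : chi (a + b) = chi a * chi b := by
  rcases F2_cases a with ha | ha <;> rcases F2_cases b with hb | hb <;>
    subst ha <;> subst hb <;>
    simp only [chi, show ((1:F2) + 1) = 0 from by decide, add_zero, zero_add,
      if_pos rfl, if_neg (show (1:F2) ≠ 0 from by decide)] <;> norm_num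

lemma chi_sum {ι : Type*} (s : Finset ι) (f : ι → F2) :
    chi (∑ i ∈ s, f i) = ∏ i ∈ s, chi (f i) := by
  induction s using Finset.cons_induction with
  | empty => simp [chi_zero]
  | cons a s ha ih => rw [Finset.sum_cons, Finset.prod_cons, chi_add, ih]

lemma card_F4 : Fintype.card F4 = 4 := by
  have := GaloisField.card 2 2 (by norm_num)
  rwa [Nat.card_eq_fintype_card] at this

lemma exists_tr (c : F4) (hc : c ≠ 0) : ∃ t : F4, trF (t * c) = 1 := by
  by_contra hf
  push_neg at hf
  have h01 : ∀ x : F2, x ≠ 1 → x = 0 := by decide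
  apply hc
  apply (traceForm_nondegenerate F2 F4).1 c
  intro y
  have h2 : trF (y * c) = 0 := h01 _ (hf y)
  simpa [Algebra.traceForm_apply, trF, mul_comm] using h2

lemma sum_chi_mul (c : F4) (hc : c ≠ 0) : ∑ t : F4, chi (trF (t * c)) = 0 := by
  obtain ⟨t0, ht0⟩ := exists_tr c hc
  have h1 : ∑ t : F4, chi (trF ((t + t0) * c)) = ∑ t : F4, chi (trF (t * c)) :=
    Fintype.sum_equiv (Equiv.addRight t0) _ _ (fun t => rfl)
  have h2 : ∀ t : F4, chi (trF ((t + t0) * c)) = - chi (trF (t * c)) := by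
    intro t
    rw [add_mul, map_add, chi_add, ht0, chi_one]
    ring
  rw [Finset.sum_congr rfl (fun t _ => h2 t), Finset.sum_neg_distrib] at h1
  linarith

lemma sq_bij : Function.Bijective (fun t : F4 => t ^ 2) := by
  have : (fun t : F4 => t ^ 2) = frobenius F4 2 := by
    funext t; simp [frobenius_def]
  rw [this]
  exact Finite.injective_iff_bijective.mp (frobenius F4 2).injective

lemma sum_chi_sq (c : F4) : ∑ t : F4, chi (trF (c * t ^ 2)) = if c = 0 then 4 else 0 := by
  split_ifs with h
  · subst h
    simp [chi_zero, Finset.card_univ, card_F4]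
  · calc ∑ t : F4, chi (trF (c * t ^ 2)) = ∑ s : F4, chi (trF (c * s)) :=
          Fintype.sum_bijective _ sq_bij _ _ (fun t => rfl)
    _ = ∑ s : F4, chi (trF (s * c)) := by simp_rw [mul_comm]
    _ = 0 := sum_chi_mul c h

end Aux
section Kraw
open scoped Classical
open Polynomial

lemma wt_eq {α : Type*} [Zero α] {N : ℕ} (x : Fin N → α) :
    wt x = (univ.filter (fun i => x i ≠ 0)).card := by
  rw [wt, Nat.card_eq_fintype_card, Fintype.card_subtype]

lemma wt_le {α : Type*} [Zero α] {N : ℕ} (x : Fin N → α) : wt x ≤ N := by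
  rw [wt_eq]
  exact le_trans (Finset.card_filter_le _ _) (by simp)

lemma coeff_pow (r : ℚ) (k s : ℕ) :
    ((Polynomial.C r * X + 1 : ℚ[X]) ^ k).coeff s = r ^ s * (k.choose s) := by
  rw [add_pow, Polynomial.finset_sum_coeff]
  have key : ∀ j ∈ Finset.range (k + 1),
      ((Polynomial.C r * X) ^ j * 1 ^ (k - j) * (k.choose j : ℚ[X])).coeff s
        = if s = j then r ^ j * (k.choose j) else 0 := by
    intro j hj
    rw [one_pow, mul_one, mul_pow, ← Polynomial.C_pow, ← Polynomial.C_eq_natCast,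
      Polynomial.coeff_mul_C, Polynomial.coeff_C_mul_X_pow]
    simp [ite_mul]
  rw [Finset.sum_congr rfl key, Finset.sum_ite_eq]
  by_cases hs : s ∈ Finset.range (k + 1)
  · simp [hs]
  · rw [if_neg hs]
    rw [Finset.mem_range] at hs
    rw [Nat.choose_eq_zero_of_lt (by omega)]
    simp

lemma kraw_sum {α : Type*} [Fintype α] [Zero α]
    {N : ℕ} (q : ℕ) (hq : Fintype.card α = q)
    (ψ : Fin N → α → ℚ) (hψ0 : ∀ i, ψ i 0 = 1)
    (T : Finset (Fin N))
    (h1 : ∀ i ∉ T, ∀ t, ψ i t = 1)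
    (h2 : ∀ i ∈ T, ∑ t : α, ψ i t = 0)
    (l : ℕ) :
    ∑ a ∈ univ.filter (fun a : Fin N → α => wt a = l), ∏ i, ψ i (a i)
      = kraw l T.card N q := by
  classical
  have hq1 : 1 ≤ q := hq ▸ Fintype.card_pos_iff.mpr ⟨(0 : α)⟩
  set P : ℚ[X] := ∏ i, (∑ t : α, Polynomial.C (ψ i t) * X ^ (if t = 0 then 0 else 1)) with hP
  have hcoord : ∀ i, (∑ t : α, Polynomial.C (ψ i t) * X ^ (if t = 0 then 0 else 1))
      = if i ∈ T then (Polynomial.C (-1 : ℚ) * X + 1)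
        else (Polynomial.C ((q : ℚ) - 1) * X + 1) := by
    intro i
    rw [← Finset.sum_erase_add _ _ (Finset.mem_univ (0 : α))]
    have h0 : Polynomial.C (ψ i 0) * X ^ (if (0 : α) = 0 then 0 else 1) = 1 := by
      simp [hψ0]
    rw [h0]
    have hrest : ∀ t ∈ Finset.univ.erase (0 : α),
        Polynomial.C (ψ i t) * X ^ (if t = 0 then 0 else 1) = Polynomial.C (ψ i t) * X := by
      intro t ht
      rw [if_neg (Finset.mem_erase.mp ht).1, pow_one]
    rw [Finset.sum_congr rfl hrest, ← Finset.sum_mul, ← map_sum]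
    have hcard : (Finset.univ.erase (0 : α)).card = q - 1 := by
      rw [Finset.card_erase_of_mem (Finset.mem_univ _), Finset.card_univ, hq]
    by_cases hi : i ∈ T
    · have : ∑ t ∈ Finset.univ.erase (0 : α), ψ i t = -1 := by
        have := Finset.sum_erase_add Finset.univ (ψ i) (Finset.mem_univ (0 : α))
        rw [h2 i hi] at this
        rw [hψ0] at this
        linarith
      rw [this, if_pos hi]
    · have : ∑ t ∈ Finset.univ.erase (0 : α), ψ i t = (q : ℚ) - 1 := by
        rw [Finset.sum_congr rfl (fun t _ => h1 i hi t), Finset.sum_const, hcard]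
        rw [nsmul_eq_mul, mul_one, Nat.cast_sub hq1, Nat.cast_one]
      rw [this, if_neg hi]
  have hPfact : P = (Polynomial.C (-1 : ℚ) * X + 1) ^ T.card
      * (Polynomial.C ((q : ℚ) - 1) * X + 1) ^ (N - T.card) := by
    rw [hP, Finset.prod_congr rfl (fun i _ => hcoord i), Finset.prod_ite _ _,
      Finset.prod_const, Finset.prod_const]
    have e1 : univ.filter (fun i : Fin N => i ∈ T) = T := by ext i; simp
    have e2 : univ.filter (fun i : Fin N => ¬ i ∈ T) = Tᶜ := by ext i; simp
    rw [e1, e2, Finset.card_compl, Fintype.card_fin]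
  have hwt : ∀ a : Fin N → α, (∑ i, if a i = 0 then 0 else 1) = wt a := by
    intro a
    rw [wt_eq, Finset.card_filter]
    apply Finset.sum_congr rfl
    intro i _
    by_cases h : a i = 0 <;> simp [h]
  have hPsum : P = ∑ a : Fin N → α, Polynomial.C (∏ i, ψ i (a i)) * X ^ (wt a) := by
    rw [hP, Finset.prod_univ_sum, Fintype.piFinset_univ]
    apply Finset.sum_congr rfl
    intro a _
    rw [Finset.prod_mul_distrib, ← map_prod, Finset.prod_pow_eq_pow_sum, hwt]
  have hcoeff : P.coeff l
      = ∑ a ∈ univ.filter (fun a : Fin N → α => wt a = l), ∏ i, ψ i (a i) := by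
    rw [hPsum, Polynomial.finset_sum_coeff,
      Finset.sum_congr rfl (fun a _ => Polynomial.coeff_C_mul_X_pow _ _ _),
      Finset.sum_filter]
    apply Finset.sum_congr rfl
    intro a _
    rcases eq_or_ne (wt a) l with h | h
    · simp [h]
    · rw [if_neg h, if_neg (Ne.symm h)]
  rw [← hcoeff, hPfact, Polynomial.coeff_mul,
    Finset.Nat.sum_antidiagonal_eq_sum_range_succ_mk]
  unfold kraw
  apply Finset.sum_congr rfl
  intro s hs
  rw [coeff_pow, coeff_pow]
  ring

end Kraw
section Main
open scoped Classical

lemma trF_smul (c : F2) (z : F4) : trF (algebraMap F2 F4 c * z) = c * trF z := by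
  rw [← Algebra.smul_def, map_smul, smul_eq_mul]

lemma ipD_rowSum {n m : ℕ} (H : Fin m → Fin n → F4) (u : Fin m → F2) (x : Fin n → F4) :
    ipD (fun i => ∑ r, algebraMap F2 F4 (u r) * H r i) x = ∑ r, u r * ipD (H r) x := by
  unfold ipD
  have step : (∑ i, (∑ r, algebraMap F2 F4 (u r) * H r i) * x i ^ 2)
      = ∑ r, algebraMap F2 F4 (u r) * ∑ i, H r i * x i ^ 2 := by
    calc (∑ i, (∑ r, algebraMap F2 F4 (u r) * H r i) * x i ^ 2)
        = ∑ i, ∑ r, algebraMap F2 F4 (u r) * (H r i * x i ^ 2) := by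
          apply Finset.sum_congr rfl
          intro i _
          rw [Finset.sum_mul]
          apply Finset.sum_congr rfl
          intro r _
          ring
      _ = ∑ r, ∑ i, algebraMap F2 F4 (u r) * (H r i * x i ^ 2) := Finset.sum_comm
      _ = ∑ r, algebraMap F2 F4 (u r) * ∑ i, H r i * x i ^ 2 := by
          apply Finset.sum_congr rfl
          intro r _
          rw [Finset.mul_sum]
  rw [step, map_sum]
  exact Finset.sum_congr rfl (fun r _ => trF_smul _ _)

lemma ipD_add_left {n : ℕ} (a b x : Fin n → F4) :
    ipD (fun i => a i + b i) x = ipD a x + ipD b x := by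
  unfold ipD
  rw [← map_add, ← Finset.sum_add_distrib]
  congr 1
  apply Finset.sum_congr rfl
  intro i _
  ring

lemma F2_add_eq_zero {a b : F2} : a + b = 0 ↔ a = b := by
  constructor
  · intro h
    have := CharTwo.add_self_eq_zero (R := F2) b
    calc a = a + b + b := by rw [add_assoc, this, add_zero]
    _ = b := by rw [h, zero_add]
  · intro h; rw [h, CharTwo.add_self_eq_zero]

lemma mem_dual_iff {n m : ℕ} (H : Fin m → Fin n → F4)
    (v : (Fin n → F4) × (Fin m → F2)) :
    v ∈ dualDS (CDS H) ↔ ∀ r0, v.2 r0 = ipD (H r0) v.1 := by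
  constructor
  · intro hv r0
    have hC : ∀ u : Fin m → F2, ((fun i => ∑ r, algebraMap F2 F4 (u r) * H r i, u) :
        (Fin n → F4) × (Fin m → F2)) ∈ CDS H := fun u => ⟨u, rfl⟩
    have h := hv _ (hC (Pi.single r0 (1 : F2)))
    rw [ipDS] at h
    simp only [ipD_rowSum] at h
    have e1 : (∑ r, (Pi.single r0 (1 : F2) : Fin m → F2) r * ipD (H r) v.1) = ipD (H r0) v.1 := by
      rw [Finset.sum_eq_single r0]
      · simp
      · intro b _ hb; simp [Pi.single_apply, hb]
      · intro hb; exact absurd (Finset.mem_univ r0) hb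
    have e2 : (∑ j, (Pi.single r0 (1 : F2) : Fin m → F2) j * v.2 j) = v.2 r0 := by
      rw [Finset.sum_eq_single r0]
      · simp
      · intro b _ hb; simp [Pi.single_apply, hb]
      · intro hb; exact absurd (Finset.mem_univ r0) hb
    rw [e1, e2] at h
    exact (F2_add_eq_zero.mp h).symm
  · rintro hv w ⟨u, rfl⟩
    rw [ipDS]
    simp only [ipD_rowSum]
    rw [F2_add_eq_zero]
    apply Finset.sum_congr rfl
    intro r _
    rw [hv r]

lemma mem_CDS_iff {n m : ℕ} (H : Fin m → Fin n → F4)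
    (w : (Fin n → F4) × (Fin m → F2)) :
    w ∈ CDS H ↔ w.1 = fun i => ∑ r, algebraMap F2 F4 (w.2 r) * H r i := by
  constructor
  · rintro ⟨u, rfl⟩; rfl
  · intro h
    exact ⟨w.2, Prod.ext h rfl⟩

lemma F4_add_eq_zero {a b : F4} : a + b = 0 ↔ a = b := by
  constructor
  · intro h
    have := CharTwo.add_self_eq_zero (R := F4) b
    calc a = a + b + b := by rw [add_assoc, this, add_zero]
    _ = b := by rw [h, zero_add]
  · intro h; rw [h, CharTwo.add_self_eq_zero]

lemma orth_sum {n m : ℕ} (H : Fin m → Fin n → F4) (w : (Fin n → F4) × (Fin m → F2)) :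
    ∑ x : Fin n → F4, chi (ipDS w (x, fun r => ipD (H r) x))
      = if w ∈ CDS H then (4 : ℚ) ^ n else 0 := by
  set c : Fin n → F4 := fun i => w.1 i + ∑ r, algebraMap F2 F4 (w.2 r) * H r i with hc
  have key : ∀ x, ipDS w (x, fun r => ipD (H r) x) = ipD c x := by
    intro x
    rw [ipDS, hc]
    have : ipD (fun i => w.1 i + ∑ r, algebraMap F2 F4 (w.2 r) * H r i) x
        = ipD w.1 x + ipD (fun i => ∑ r, algebraMap F2 F4 (w.2 r) * H r i) x :=
      ipD_add_left _ _ _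
    rw [this, ipD_rowSum]
  have hsum : ∑ x : Fin n → F4, chi (ipD c x) = ∏ i, ∑ t : F4, chi (trF (c i * t ^ 2)) := by
    rw [Finset.prod_univ_sum, Fintype.piFinset_univ]
    apply Finset.sum_congr rfl
    intro x _
    rw [ipD, map_sum, chi_sum]
  rw [Finset.sum_congr rfl (fun x _ => by rw [key x]), hsum,
    Finset.prod_congr rfl (fun i _ => sum_chi_sq (c i))]
  by_cases hw : w ∈ CDS H
  · rw [if_pos hw]
    rw [mem_CDS_iff] at hw
    have : ∀ i, c i = 0 := by
      intro i
      rw [hc]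
      simp only []
      rw [F4_add_eq_zero]
      exact congrFun hw i
    rw [Finset.prod_congr rfl (fun i _ => by rw [if_pos (this i)])]
    simp
  · rw [if_neg hw]
    have : ∃ i, c i ≠ 0 := by
      by_contra hcon
      push_neg at hcon
      apply hw
      rw [mem_CDS_iff]
      funext i
      exact F4_add_eq_zero.mp (hcon i)
    obtain ⟨i, hi⟩ := this
    exact Finset.prod_eq_zero (Finset.mem_univ i) (if_neg hi)

end Main
section Apps
open scoped Classical

lemma appF4 {n : ℕ} (x : Fin n → F4) (l : ℕ) :
    ∑ a ∈ univ.filter (fun a : Fin n → F4 => wt a = l), chi (ipD a x)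
      = kraw l (wt x) n 4 := by
  have key := kraw_sum (α := F4) 4 card_F4 (fun i t => chi (trF (t * (x i) ^ 2)))
    (fun i => by simp only [zero_mul, map_zero, chi_zero])
    (univ.filter (fun i => x i ≠ 0))
    (fun i hi t => by
      rw [Finset.mem_filter] at hi
      push_neg at hi
      have hx0 : x i = 0 := hi (Finset.mem_univ i)
      simp only [hx0]
      norm_num
      simp only [map_zero, chi_zero])
    (fun i hi => by
      rw [Finset.mem_filter] at hi
      exact sum_chi_mul _ (pow_ne_zero 2 hi.2))
    l
  rw [wt_eq x, ← key]
  apply Finset.sum_congr rfl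
  intro a _
  rw [ipD, map_sum, chi_sum]

lemma sum_chi_F2 : ∑ t : F2, chi t = 0 := by
  rw [show (univ : Finset F2) = {0, 1} from by decide, Finset.sum_pair (by decide)]
  rw [chi_zero, chi_one]
  ring

lemma appF2 {m : ℕ} (y : Fin m → F2) (r : ℕ) :
    ∑ b ∈ univ.filter (fun b : Fin m → F2 => wt b = r), chi (∑ j, b j * y j)
      = kraw r (wt y) m 2 := by
  have key := kraw_sum (α := F2) 2 (ZMod.card 2) (fun j t => chi (t * y j))
    (fun j => by simp only [zero_mul, chi_zero])
    (univ.filter (fun j => y j ≠ 0))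
    (fun j hj t => by
      rw [Finset.mem_filter] at hj
      push_neg at hj
      simp only [hj (Finset.mem_univ j), mul_zero, chi_zero])
    (fun j hj => by
      rw [Finset.mem_filter] at hj
      have h1 : y j = 1 := (F2_cases (y j)).resolve_left hj.2
      simp only [h1, mul_one]
      exact sum_chi_F2)
    r
  have lhs_eq : ∑ b ∈ univ.filter (fun b : Fin m → F2 => wt b = r), chi (∑ j, b j * y j)
      = ∑ a ∈ univ.filter (fun a : Fin m → F2 => wt a = r), ∏ i, chi (a i * y i) :=
    Finset.sum_congr rfl (fun b _ => chi_sum _ _)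
  rw [lhs_eq, key, wt_eq y]
  congr 2
  ext i
  simp

end Apps

section Final
open scoped Classical

lemma Bwt_eq_card {n m : ℕ} (D : Set ((Fin n → F4) × (Fin m → F2))) (i j : ℕ) :
    Bwt D i j = (univ.filter (fun w : (Fin n → F4) × (Fin m → F2) =>
      w ∈ D ∧ wt w.1 = i ∧ wt w.2 = j)).card := by
  rw [Bwt, Nat.card_eq_fintype_card, Fintype.card_subtype]

lemma double_ite {A B : ℕ} (i0 j0 : ℕ) (hi : i0 < A) (hj : j0 < B) (f g : ℕ → ℚ) :
    ∑ i ∈ Finset.range A, ∑ j ∈ Finset.range B,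
      (if i0 = i ∧ j0 = j then f i * g j else 0) = f i0 * g j0 := by
  have hrow : ∀ i, (∑ j ∈ Finset.range B, if i0 = i ∧ j0 = j then f i * g j else 0)
      = if i0 = i then f i * g j0 else 0 := by
    intro i
    by_cases h : i0 = i
    · subst h
      simp only [eq_self_iff_true, true_and, if_true]
      rw [Finset.sum_ite_eq, if_pos (Finset.mem_range.mpr hj)]
    · simp [h]
  rw [Finset.sum_congr rfl (fun i _ => hrow i), Finset.sum_ite_eq,
    if_pos (Finset.mem_range.mpr hi)]

/-- generalized MacWilliams identity for split weight enumerators. -/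
theorem stmt3 (n k : ℕ) (hk : k ≤ n) (H : Fin (n - k) → Fin n → F4)
    (hind : LinearIndependent F2 H)
    (horth : ∀ r s, ipD (H r) (H s) = 0)
    (l r : ℕ) (hl : l ≤ n) (hr : r ≤ n - k) :
    (Bwt (CDS H) l r : ℚ) =
      (1 / 4 ^ n) * ∑ i ∈ Finset.range (n + 1), ∑ j ∈ Finset.range (n - k + 1),
        (Bwt (dualDS (CDS H)) i j : ℚ) * kraw l i n 4 * kraw r j (n - k) 2 := by
  have hk' : True := trivial
  set Dfin : Finset ((Fin n → F4) × (Fin (n - k) → F2)) :=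
    univ.filter (· ∈ dualDS (CDS H)) with hDfin
  -- Step 1: the double sum equals a sum over the dual code
  have step1 : ∑ i ∈ Finset.range (n + 1), ∑ j ∈ Finset.range (n - k + 1),
      (Bwt (dualDS (CDS H)) i j : ℚ) * kraw l i n 4 * kraw r j (n - k) 2
      = ∑ v ∈ Dfin, kraw l (wt v.1) n 4 * kraw r (wt v.2) (n - k) 2 := by
    have hterm : ∀ i j, (Bwt (dualDS (CDS H)) i j : ℚ) * kraw l i n 4 * kraw r j (n - k) 2
        = ∑ v ∈ Dfin, (if wt v.1 = i ∧ wt v.2 = j then kraw l i n 4 * kraw r j (n - k) 2 else 0) := by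
      intro i j
      have hcard : (Bwt (dualDS (CDS H)) i j : ℚ)
          = ∑ v ∈ Dfin, (if wt v.1 = i ∧ wt v.2 = j then (1 : ℚ) else 0) := by
        rw [Finset.sum_boole, hDfin, Finset.filter_filter, Bwt_eq_card]
      rw [hcard, Finset.sum_mul, Finset.sum_mul]
      apply Finset.sum_congr rfl
      intro v _
      by_cases h : wt v.1 = i ∧ wt v.2 = j <;> simp [h]
    rw [Finset.sum_congr rfl (fun i _ => Finset.sum_congr rfl (fun j _ => hterm i j))]
    rw [Finset.sum_congr rfl (fun i _ => Finset.sum_comm)]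
    rw [Finset.sum_comm]
    -- now : ∑ v ∈ Dfin, ∑ i ∈ range (n+1), ∑ j ∈ range (m+1), ite ...
    apply Finset.sum_congr rfl
    intro v _
    exact double_ite (wt v.1) (wt v.2) (Nat.lt_succ_of_le (wt_le v.1))
      (Nat.lt_succ_of_le (wt_le v.2)) _ _
  -- Step 2: parametrize the dual code
  have step2 : ∑ v ∈ Dfin, kraw l (wt v.1) n 4 * kraw r (wt v.2) (n - k) 2
      = ∑ x : Fin n → F4, kraw l (wt x) n 4 * kraw r (wt (fun r0 => ipD (H r0) x)) (n - k) 2 := by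
    apply Finset.sum_nbij' (fun v : (Fin n → F4) × (Fin (n - k) → F2) => v.1)
      (fun x => (x, fun r0 => ipD (H r0) x))
    · intro a _; exact Finset.mem_univ _
    · intro x _
      rw [hDfin, Finset.mem_filter]
      refine ⟨Finset.mem_univ _, ?_⟩
      rw [mem_dual_iff]
      intro r0; rfl
    · intro v hv
      rw [hDfin, Finset.mem_filter, mem_dual_iff] at hv
      have h2 : v.2 = fun r0 => ipD (H r0) v.1 := funext (fun r0 => hv.2 r0)
      exact Prod.ext rfl h2.symm
    · intro x _; rfl
    · intro v hv
      rw [hDfin, Finset.mem_filter, mem_dual_iff] at hv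
      have h2 : v.2 = fun r0 => ipD (H r0) v.1 := funext (fun r0 => hv.2 r0)
      rw [h2]
  -- Step 3: expand Krawtchouk values as character sums and swap
  have step3 : ∑ x : Fin n → F4,
      kraw l (wt x) n 4 * kraw r (wt (fun r0 => ipD (H r0) x)) (n - k) 2
      = ∑ a ∈ univ.filter (fun a : Fin n → F4 => wt a = l),
          ∑ b ∈ univ.filter (fun b : Fin (n - k) → F2 => wt b = r),
            (if (a, b) ∈ CDS H then (4 : ℚ) ^ n else 0) := by
    have hx : ∀ x : Fin n → F4,
        kraw l (wt x) n 4 * kraw r (wt (fun r0 => ipD (H r0) x)) (n - k) 2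
        = ∑ a ∈ univ.filter (fun a : Fin n → F4 => wt a = l),
            ∑ b ∈ univ.filter (fun b : Fin (n - k) → F2 => wt b = r),
              chi (ipD a x) * chi (∑ j, b j * ipD (H j) x) := by
      intro x
      rw [← appF4 x l, ← appF2 (fun r0 => ipD (H r0) x) r, Finset.sum_mul_sum]
    rw [Finset.sum_congr rfl (fun x _ => hx x), Finset.sum_comm]
    apply Finset.sum_congr rfl
    intro a _
    rw [Finset.sum_comm]
    apply Finset.sum_congr rfl
    intro b _
    have : ∀ x : Fin n → F4, chi (ipD a x) * chi (∑ j, b j * ipD (H j) x)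
        = chi (ipDS (a, b) (x, fun r0 => ipD (H r0) x)) := by
      intro x
      rw [ipDS, chi_add]
    rw [Finset.sum_congr rfl (fun x _ => this x), orth_sum H (a, b)]
  -- Step 4: count the code
  have step4 : ∑ a ∈ univ.filter (fun a : Fin n → F4 => wt a = l),
      ∑ b ∈ univ.filter (fun b : Fin (n - k) → F2 => wt b = r),
        (if (a, b) ∈ CDS H then (4 : ℚ) ^ n else 0)
      = 4 ^ n * (Bwt (CDS H) l r : ℚ) := by
    rw [← Finset.sum_product']
    rw [← Finset.filter_product]
    rw [Finset.univ_product_univ]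
    have : ∀ w ∈ univ.filter
        (fun w : (Fin n → F4) × (Fin (n - k) → F2) => wt w.1 = l ∧ wt w.2 = r),
        (if w ∈ CDS H then (4 : ℚ) ^ n else 0)
        = (if w ∈ CDS H ∧ wt w.1 = l ∧ wt w.2 = r then (4 : ℚ) ^ n else 0) := by
      intro w hw
      rw [Finset.mem_filter] at hw
      by_cases h : w ∈ CDS H
      · rw [if_pos h, if_pos ⟨h, hw.2⟩]
      · rw [if_neg h, if_neg (fun hc => h hc.1)]
    rw [Finset.sum_congr rfl this, Finset.sum_filter_of_ne (by
      intro w _ hne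
      by_contra hc
      exact hne (by rw [if_neg (fun hh => hc hh.2)]))]
    rw [Finset.sum_ite, Finset.sum_const_zero, add_zero, Finset.sum_const,
      Bwt_eq_card, nsmul_eq_mul, mul_comm]
  rw [step1, step2, step3, step4]
  have h4 : (4 : ℚ) ^ n ≠ 0 := pow_ne_zero _ (by norm_num)
  field_simp

end Final
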